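/- Fix real numbers a₁₁, a₂₂ and positive reals a₁₂, a₂₁, d₁, d₂, and let j₁, j₂ : [0,l] → ℝ with j_i(x) = ∫_0^∞ J_i(x-y) dy for kernels J₁, J₂ satisfying (J). Define β(x) = ( -(d₁ j₁(x) - a₁₁ + d₂ j₂(x) - a₂₂) + √((d₁ j₁(x) - a₁₁ - d₂ j₂(x) + a₂₂)² + 4 a₁₂ a₂₁) ) / 2, the larger eigenvalue of the matrix H(x) = [[-d₁ j₁(x) + a₁₁, a₁₂],[a₂₁, -d₂ j₂(x) + a₂₂]]. Then β is nonincreasing on [0,l] and β'(0) < 0. -/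

import Mathlib

open MeasureTheory Set

/-- Change of variables: `∫ y in Ioi 0, J (x - y) = ∫ u in Iic x, J u`. -/
lemma stmt2_aux_j (J : ℝ → ℝ) (x : ℝ) :
    ∫ y in Ioi (0:ℝ), J (x - y) = ∫ u in Iic x, J u := by
  have h1 : ∫ y in Ioi (0:ℝ), J (x - y)
      = ∫ y, (Iio x).indicator J (x - y) := by
    rw [← integral_indicator measurableSet_Ioi]
    congr 1; ext y
    by_cases hy : y ∈ Ioi (0:ℝ)
    · rw [indicator_of_mem hy, indicator_of_mem]
      simp only [mem_Ioi] at hy; simp only [mem_Iio]; linarith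
    · rw [indicator_of_notMem hy, indicator_of_notMem]
      simp only [mem_Ioi, not_lt] at hy; simp only [mem_Iio, not_lt]; linarith
  have h2 : ∫ y, (Iio x).indicator J (x - y) = ∫ y, (Iio x).indicator J y := by
    have h1' := integral_neg_eq_self (fun y => (Iio x).indicator J (x + y))
      (volume : Measure ℝ)
    simp only [← sub_eq_add_neg] at h1'
    rw [h1', integral_add_left_eq_self]
  rw [h1, h2, integral_indicator measurableSet_Iio,
      setIntegral_congr_set Iio_ae_eq_Iic]

/-- Lipschitz bound for `√(s² + c)`. -/
lemma stmt2_sqrt_lip (s t c : ℝ) (hc : 0 ≤ c) :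
    Real.sqrt (s ^ 2 + c) ≤ Real.sqrt (t ^ 2 + c) + |s - t| := by
  have h0 : 0 ≤ Real.sqrt (t ^ 2 + c) + |s - t| :=
    add_nonneg (Real.sqrt_nonneg _) (abs_nonneg _)
  have hT : |t| ≤ Real.sqrt (t ^ 2 + c) := by
    rw [← Real.sqrt_sq_eq_abs]
    exact Real.sqrt_le_sqrt (by nlinarith)
  have hle : s ^ 2 + c ≤ (Real.sqrt (t ^ 2 + c) + |s - t|) ^ 2 := by
    have hsq : Real.sqrt (t ^ 2 + c) ^ 2 = t ^ 2 + c :=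
      Real.sq_sqrt (by positivity)
    have h1 : s ^ 2 ≤ t ^ 2 + 2 * |t| * |s - t| + (s - t) ^ 2 := by
      have : s ^ 2 = t ^ 2 + 2 * (t * (s - t)) + (s - t) ^ 2 := by ring
      have h2 : t * (s - t) ≤ |t| * |s - t| := by
        calc t * (s - t) ≤ |t * (s - t)| := le_abs_self _
        _ = |t| * |s - t| := abs_mul _ _
      linarith
    have habs : |s - t| ^ 2 = (s - t) ^ 2 := sq_abs _
    nlinarith [abs_nonneg (s - t)]
  calc Real.sqrt (s ^ 2 + c) ≤ Real.sqrt ((Real.sqrt (t ^ 2 + c) + |s - t|) ^ 2) :=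
        Real.sqrt_le_sqrt hle
    _ = Real.sqrt (t ^ 2 + c) + |s - t| := Real.sqrt_sq h0

theorem stmt_2 (a11 a22 a12 a21 d1 d2 l : ℝ)
    (ha12 : 0 < a12) (ha21 : 0 < a21) (hd1 : 0 < d1) (hd2 : 0 < d2) (hl : 0 < l)
    (J1 J2 : ℝ → ℝ)
    (hJ1c : Continuous J1) (hJ1b : ∃ C, ∀ x, J1 x ≤ C) (hJ1nn : ∀ x, 0 ≤ J1 x)
    (hJ10 : 0 < J1 0) (hJ1even : ∀ x, J1 (-x) = J1 x) (hJ1int : ∫ x, J1 x = 1)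
    (hJ2c : Continuous J2) (hJ2b : ∃ C, ∀ x, J2 x ≤ C) (hJ2nn : ∀ x, 0 ≤ J2 x)
    (hJ20 : 0 < J2 0) (hJ2even : ∀ x, J2 (-x) = J2 x) (hJ2int : ∫ x, J2 x = 1)
    (j1 j2 : ℝ → ℝ)
    (hj1 : ∀ x, j1 x = ∫ y in Ioi (0:ℝ), J1 (x - y))
    (hj2 : ∀ x, j2 x = ∫ y in Ioi (0:ℝ), J2 (x - y))
    (β : ℝ → ℝ)
    (hβ : ∀ x, β x = (-(d1 * j1 x - a11 + d2 * j2 x - a22)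
      + Real.sqrt ((d1 * j1 x - a11 - d2 * j2 x + a22) ^ 2 + 4 * a12 * a21)) / 2) :
    AntitoneOn β (Icc 0 l) ∧ deriv β 0 < 0 := by
  -- J1, J2 are integrable since their integrals are nonzero
  have hI1 : Integrable J1 := by
    by_contra h; rw [integral_undef h] at hJ1int; norm_num at hJ1int
  have hI2 : Integrable J2 := by
    by_contra h; rw [integral_undef h] at hJ2int; norm_num at hJ2int
  -- rewrite j1, j2 as cumulative integrals
  have hj1' : ∀ x, j1 x = ∫ u in Iic x, J1 u := fun x => by
    rw [hj1 x, stmt2_aux_j]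
  have hj2' : ∀ x, j2 x = ∫ u in Iic x, J2 u := fun x => by
    rw [hj2 x, stmt2_aux_j]
  -- monotonicity of j1, j2
  have hmono : ∀ (J : ℝ → ℝ), Integrable J → (∀ x, 0 ≤ J x) →
      ∀ x y : ℝ, x ≤ y → (∫ u in Iic x, J u) ≤ ∫ u in Iic y, J u := by
    intro J hI hnn x y hxy
    exact setIntegral_mono_set hI.integrableOn
      (Filter.Eventually.of_forall hnn) (HasSubset.Subset.eventuallyLE (Iic_subset_Iic.2 hxy))
  have hc : (0:ℝ) ≤ 4 * a12 * a21 := by positivity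
  constructor
  · -- Antitone
    intro x hx y hy hxy
    have h1 : j1 x ≤ j1 y := by rw [hj1' x, hj1' y]; exact hmono J1 hI1 hJ1nn x y hxy
    have h2 : j2 x ≤ j2 y := by rw [hj2' x, hj2' y]; exact hmono J2 hI2 hJ2nn x y hxy
    rw [hβ x, hβ y]
    set p1 := d1 * j1 x - a11 with hp1
    set q1 := d2 * j2 x - a22 with hq1
    set p2 := d1 * j1 y - a11 with hp2
    set q2 := d2 * j2 y - a22 with hq2
    have hpp : p1 ≤ p2 := by
      simp only [hp1, hp2]
      nlinarith
    have hqq : q1 ≤ q2 := by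
      simp only [hq1, hq2]
      nlinarith
    have hlip := stmt2_sqrt_lip (p2 - q2) (p1 - q1) (4 * a12 * a21) hc
    have habs : |p2 - q2 - (p1 - q1)| ≤ (p2 - p1) + (q2 - q1) := by
      rw [abs_le]; constructor <;> nlinarith
    have : d1 * j1 y - a11 - d2 * j2 y + a22 = p2 - q2 := by ring
    rw [this]
    have : d1 * j1 x - a11 - d2 * j2 x + a22 = p1 - q1 := by ring
    rw [this]
    have e1 : -(d1 * j1 y - a11 + d2 * j2 y - a22) = -(p2 + q2) := by ring
    have e2 : -(d1 * j1 x - a11 + d2 * j2 x - a22) = -(p1 + q1) := by ring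
    rw [e1, e2]
    linarith
  · -- derivative at 0
    have hder : ∀ (J : ℝ → ℝ) (j : ℝ → ℝ), Continuous J → Integrable J →
        (∀ x, j x = ∫ u in Iic x, J u) → HasDerivAt j (J 0) 0 := by
      intro J j hc' hI hj
      have heq : ∀ x, j x = (∫ u in Iic (0:ℝ), J u) + ∫ u in (0:ℝ)..x, J u := by
        intro x
        rw [hj x, ← intervalIntegral.integral_Iic_sub_Iic hI.integrableOn hI.integrableOn]
        ring
      have hd : HasDerivAt (fun x => (∫ u in Iic (0:ℝ), J u) + ∫ u in (0:ℝ)..x, J u)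
          (J 0) 0 := by
        have h := intervalIntegral.integral_hasDerivAt_right (a := (0:ℝ)) (b := (0:ℝ))
          (hI.intervalIntegrable) (hc'.stronglyMeasurableAtFilter _ _) hc'.continuousAt
        exact h.const_add (∫ u in Iic (0:ℝ), J u)
      have hje : j = fun x => (∫ u in Iic (0:ℝ), J u) + ∫ u in (0:ℝ)..x, J u :=
        funext heq
      rw [hje]; exact hd
    have hd1' : HasDerivAt j1 (J1 0) 0 := hder J1 j1 hJ1c hI1 hj1'
    have hd2' : HasDerivAt j2 (J2 0) 0 := hder J2 j2 hJ2c hI2 hj2'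
    -- derivative of the inner quadratic
    set Q0 : ℝ := d1 * j1 0 - a11 - d2 * j2 0 + a22 with hQ0
    set c : ℝ := 4 * a12 * a21 with hcdef
    have hcpos : (0:ℝ) < c := by positivity
    have hQ : HasDerivAt (fun x => d1 * j1 x - a11 - d2 * j2 x + a22)
        (d1 * J1 0 - d2 * J2 0) 0 := by
      have := (((hd1'.const_mul d1).sub_const a11).sub
        (hd2'.const_mul d2)).add_const a22
      convert this using 1 <;> rfl
    have hQ2 : HasDerivAt (fun x => (d1 * j1 x - a11 - d2 * j2 x + a22) ^ 2 + c)
        (2 * Q0 * (d1 * J1 0 - d2 * J2 0)) 0 := by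
      have h := (hQ.pow 2).add_const c
      convert h using 1
      rotate_left 3
      push_cast
      rw [hQ0]
      ring
      all_goals rfl
    have hQ2pos : 0 < Q0 ^ 2 + c := by positivity
    set S : ℝ := Real.sqrt (Q0 ^ 2 + c) with hS
    have hSpos : 0 < S := Real.sqrt_pos.2 hQ2pos
    have hsqrt : HasDerivAt (fun x =>
        Real.sqrt ((d1 * j1 x - a11 - d2 * j2 x + a22) ^ 2 + c))
        (2 * Q0 * (d1 * J1 0 - d2 * J2 0) / (2 * S)) 0 := by
      have h := (Real.hasDerivAt_sqrt (x := Q0 ^ 2 + c) (ne_of_gt hQ2pos)).comp 0 hQ2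
      convert h using 1
      rotate_left 3
      field_simp [hS]
      all_goals rfl
    have hP : HasDerivAt (fun x => -(d1 * j1 x - a11 + d2 * j2 x - a22))
        (-(d1 * J1 0 + d2 * J2 0)) 0 := by
      have := ((((hd1'.const_mul d1).sub_const a11).add
        (hd2'.const_mul d2)).sub_const a22).neg
      convert this using 1 <;> rfl
    have hβd : HasDerivAt β
        ((-(d1 * J1 0 + d2 * J2 0) + 2 * Q0 * (d1 * J1 0 - d2 * J2 0) / (2 * S)) / 2) 0 := by
      have h := (hP.add hsqrt).div_const 2
      have hfe : β = fun x => (-(d1 * j1 x - a11 + d2 * j2 x - a22)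
          + Real.sqrt ((d1 * j1 x - a11 - d2 * j2 x + a22) ^ 2 + c)) / 2 := by
        funext x; rw [hβ x, hcdef]
      rw [hfe]; exact h
    rw [hβd.deriv]
    -- show the derivative is negative
    have hSQ : |Q0| ≤ S := by
      rw [hS, ← Real.sqrt_sq_eq_abs]
      exact Real.sqrt_le_sqrt (by nlinarith)
    have hE : 2 * Q0 * (d1 * J1 0 - d2 * J2 0) / (2 * S)
        = Q0 * (d1 * J1 0 - d2 * J2 0) / S := by
      field_simp
    rw [hE]
    have habs' : |d1 * J1 0 - d2 * J2 0| < d1 * J1 0 + d2 * J2 0 := by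
      rw [abs_lt]; constructor <;> nlinarith
    have hnum : Q0 * (d1 * J1 0 - d2 * J2 0) < S * (d1 * J1 0 + d2 * J2 0) := by
      calc Q0 * (d1 * J1 0 - d2 * J2 0) ≤ |Q0 * (d1 * J1 0 - d2 * J2 0)| := le_abs_self _
        _ = |Q0| * |d1 * J1 0 - d2 * J2 0| := abs_mul _ _
        _ ≤ S * |d1 * J1 0 - d2 * J2 0| :=
            mul_le_mul_of_nonneg_right hSQ (abs_nonneg _)
        _ < S * (d1 * J1 0 + d2 * J2 0) := by
            exact mul_lt_mul_of_pos_left habs' hSpos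
    have hdiv : Q0 * (d1 * J1 0 - d2 * J2 0) / S < d1 * J1 0 + d2 * J2 0 := by
      rw [div_lt_iff₀ hSpos]; nlinarith
    linarith
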